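/- Let b ≥ 2 and let D be a finite set of nonnegative integers satisfying condition (P1) with respect to b. Then D satisfies the Kenyon condition with respect to b; moreover, for any choice of witnesses j(d) ≥ 0 (one for each divisor d > 1 of b) such that Φ_d(X^{b^{j(d)}}) divides P_D(X), the product ∏_{d ∣ b, d>1} Φ_d(X^{b^{j(d)}}) divides P_D(X) in ℤ[X], i.e., P_D(X) = (∏_{d ∣ b, d>1} Φ_d(X^{b^{j(d)}}))·Q(X) for some Q ∈ ℤ[X]. -/

import Mathlib

open Polynomial

/-- The mask polynomial `P_A(X) = ∑_{a ∈ A} X^a ∈ ℤ[X]` of a finite set of naturals. -/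
noncomputable def mask (A : Finset ℕ) : Polynomial ℤ := ∑ a ∈ A, X ^ a

/-- The Kenyon condition with respect to `b`. -/
def Kenyon (b : ℕ) (D : Finset ℕ) : Prop :=
  ∀ m : ℕ, 1 ≤ m → ∃ k : ℕ, 1 ≤ k ∧
    Polynomial.aeval (Complex.exp (2 * Real.pi * Complex.I * (m : ℂ) / (b : ℂ) ^ k)) (mask D) = 0

/-- Condition (P1): for every divisor `d > 1` of `b` there is `j ≥ 0` with
`Φ_d(X^{b^j}) ∣ P_D(X)`. -/
def CondP1 (b : ℕ) (D : Finset ℕ) : Prop :=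
  ∀ d : ℕ, d ∣ b → 1 < d → ∃ j : ℕ, (cyclotomic d ℤ).comp (X ^ b ^ j) ∣ mask D


lemma factor_out {b : ℕ} (hb : 2 ≤ b) : ∀ m : ℕ, 1 ≤ m → ∃ s m₁, m = b ^ s * m₁ ∧ ¬ b ∣ m₁ := by
  intro m
  induction m using Nat.strong_induction_on with
  | _ m ih =>
    intro hm
    by_cases h : b ∣ m
    · obtain ⟨m', rfl⟩ := h
      have hm' : 1 ≤ m' := Nat.pos_of_ne_zero (by rintro rfl; simp at hm)
      have hlt : m' < b * m' := by nlinarith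
      obtain ⟨s, m₁, h1, h2⟩ := ih m' hlt hm'
      exact ⟨s + 1, m₁, by rw [pow_succ]; ring_nf; rw [h1]; ring, h2⟩
    · exact ⟨0, m, by simp, h⟩

-- roots of the composite give primitive roots
lemma root_comp {b d j : ℕ} (hd1 : 1 < d) (z : ℂ)
    (hz : aeval z ((cyclotomic d ℤ).comp (X ^ b ^ j)) = 0) :
    IsPrimitiveRoot (z ^ b ^ j) d := by
  have hNZ : NeZero ((d : ℂ)) := ⟨by exact_mod_cast (by omega : d ≠ 0)⟩
  rw [aeval_comp, map_pow, aeval_X] at hz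
  have : eval (z ^ b ^ j) (cyclotomic d ℂ) = 0 := by
    rw [aeval_def, eval₂_eq_eval_map, map_cyclotomic] at hz
    exact hz
  exact (isRoot_cyclotomic_iff (R := ℂ)).mp this

lemma relprime_comp {b : ℕ} (hb : 2 ≤ b) {d e j i : ℕ} (hdb : d ∣ b) (heb : e ∣ b)
    (hd1 : 1 < d) (he1 : 1 < e) (hde : d ≠ e) :
    IsRelPrime ((cyclotomic d ℤ).comp (X ^ b ^ j)) ((cyclotomic e ℤ).comp (X ^ b ^ i)) := by
  -- helper: no common complex root
  have key : ∀ z : ℂ, aeval z ((cyclotomic d ℤ).comp (X ^ b ^ j)) = 0 →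
      aeval z ((cyclotomic e ℤ).comp (X ^ b ^ i)) = 0 → False := by
    intro z h1 h2
    have hw := root_comp (b := b) hd1 z h1
    have hv := root_comp (b := b) he1 z h2
    have hb0 : b ≠ 0 := by omega
    -- z ^ b ^ (j+1) = 1 and z ^ b ^ (i+1) = 1
    have hzj : z ^ b ^ (j + 1) = 1 := by
      obtain ⟨c, hc⟩ := hdb
      calc z ^ b ^ (j+1) = ((z ^ b ^ j) ^ d) ^ c := by
            rw [← pow_mul, ← pow_mul, ← hc, pow_succ]
        _ = 1 := by rw [hw.pow_eq_one, one_pow]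
    have hzi : z ^ b ^ (i + 1) = 1 := by
      obtain ⟨c, hc⟩ := heb
      calc z ^ b ^ (i+1) = ((z ^ b ^ i) ^ e) ^ c := by
            rw [← pow_mul, ← pow_mul, ← hc, pow_succ]
        _ = 1 := by rw [hv.pow_eq_one, one_pow]
    -- the "smaller exponent kills the other" argument
    have main : ∀ {a c : ℕ} {p q : ℕ}, a < c → z ^ b ^ (a + 1) = 1 →
        IsPrimitiveRoot (z ^ b ^ c) q → 1 < q → False := by
      intro a c p q hac hza hzc hq
      have : z ^ b ^ c = 1 := by
        have : b ^ (a + 1) ∣ b ^ c := pow_dvd_pow b (by omega)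
        obtain ⟨t, ht⟩ := this
        rw [ht, pow_mul, hza, one_pow]
      rw [this] at hzc
      exact absurd (hzc.unique IsPrimitiveRoot.one) (by omega)
    rcases lt_trichotomy j i with h | h | h
    · exact main (p := 0) h hzj hv he1
    · subst h; exact hde (hw.unique hv)
    · exact main (p := 0) h hzi hw hd1
  -- now build IsRelPrime
  intro c hcd hce
  by_contra hcu
  have hmonic : ((cyclotomic d ℤ).comp (X ^ b ^ j)).Monic := by
    apply Monic.comp (cyclotomic.monic d ℤ) (monic_X_pow _)
    simp only [natDegree_X_pow]
    positivity
  have hc0 : c ≠ 0 := by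
    rintro rfl
    exact hmonic.ne_zero (zero_dvd_iff.mp hcd)
  -- leading coefficient of c is a unit
  obtain ⟨q0, hq0⟩ := hcd
  have hlc : IsUnit c.leadingCoeff := by
    have : c.leadingCoeff * q0.leadingCoeff = 1 := by
      rw [← leadingCoeff_mul, ← hq0, hmonic.leadingCoeff]
    exact IsUnit.of_mul_eq_one _ this
  have hdeg : 0 < c.natDegree := by
    rcases Nat.eq_zero_or_pos c.natDegree with h0 | h0
    · refine absurd ?_ hcu
      have hce : c = C (c.coeff 0) := eq_C_of_natDegree_eq_zero h0
      have : c.leadingCoeff = c.coeff 0 := by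
        rw [Polynomial.leadingCoeff, h0]
      rw [hce]
      exact isUnit_C.mpr (this ▸ hlc)
    · exact h0
  -- get a complex root of c
  obtain ⟨z, hz⟩ := Complex.exists_root (f := c.map (Int.castRingHom ℂ)) (by
    rw [Polynomial.degree_map_eq_of_injective (f := Int.castRingHom ℂ) Int.cast_injective]
    exact natDegree_pos_iff_degree_pos.mp hdeg)
  have hzc : aeval z c = 0 := by rwa [aeval_def, eval₂_eq_eval_map]
  have h1 : aeval z ((cyclotomic d ℤ).comp (X ^ b ^ j)) = 0 := by
    rw [hq0, map_mul, hzc, zero_mul]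
  have h2 : aeval z ((cyclotomic e ℤ).comp (X ^ b ^ i)) = 0 := by
    obtain ⟨q, hq⟩ := hce; rw [hq, map_mul, hzc, zero_mul]
  exact key z h1 h2


set_option synthInstance.maxHeartbeats 1000000 in
theorem stmt3 (b : ℕ) (hb : 2 ≤ b) (D : Finset ℕ) (hP1 : CondP1 b D)
    (J : ℕ → ℕ) (hJ : ∀ d : ℕ, d ∣ b → 1 < d → (cyclotomic d ℤ).comp (X ^ b ^ J d) ∣ mask D) :
    Kenyon b D ∧
      (∏ d ∈ b.divisors.filter (fun d => 1 < d), (cyclotomic d ℤ).comp (X ^ b ^ J d)) ∣ mask D := by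
  constructor
  · -- Kenyon
    intro m hm
    obtain ⟨s, m₁, rfl, hbm₁⟩ := factor_out hb m hm
    have hm₁ : 0 < m₁ := Nat.pos_of_ne_zero (by rintro rfl; simp at hm)
    set g := Nat.gcd m₁ b with hg
    have hg0 : 0 < g := Nat.gcd_pos_of_pos_right _ (by omega)
    set d := b / g with hd
    set m₂ := m₁ / g with hm₂
    have hdb : d ∣ b := Nat.div_dvd_of_dvd (Nat.gcd_dvd_right _ _)
    have hgm : g ∣ m₁ := Nat.gcd_dvd_left _ _
    have hgb : g ∣ b := Nat.gcd_dvd_right _ _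
    have hd1 : 1 < d := by
      rcases Nat.lt_or_ge 1 d with h | h
      · exact h
      · exfalso
        have hd0 : 0 < d := Nat.div_pos (Nat.le_of_dvd (by omega) hgb) hg0
        have hd1' : d = 1 := by omega
        have h1 : d * g = b := by rw [hd]; exact Nat.div_mul_cancel hgb
        rw [hd1', one_mul] at h1
        exact hbm₁ (h1 ▸ hgm)
    have hcop : Nat.Coprime m₂ d := Nat.coprime_div_gcd_div_gcd hg0
    -- primitive root
    have hζ : IsPrimitiveRoot (Complex.exp (2 * Real.pi * Complex.I / d)) d :=
      Complex.isPrimitiveRoot_exp d (by omega)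
    have hw : IsPrimitiveRoot (Complex.exp (2 * Real.pi * Complex.I / d) ^ m₂) d :=
      hζ.pow_of_coprime m₂ hcop
    refine ⟨s + 1 + J d, by omega, ?_⟩
    set k := s + 1 + J d with hk
    set z := Complex.exp (2 * Real.pi * Complex.I * ((b ^ s * m₁ : ℕ) : ℂ) / (b : ℂ) ^ k) with hz
    have hbC : (b : ℂ) ≠ 0 := by exact_mod_cast (by omega : b ≠ 0)
    have hdC : (d : ℂ) ≠ 0 := by exact_mod_cast (by omega : d ≠ 0)
    have hgC : (g : ℂ) ≠ 0 := by exact_mod_cast (by omega : g ≠ 0)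
    have hbdg : (b : ℂ) = (d : ℂ) * g := by
      have : d * g = b := by rw [hd]; exact Nat.div_mul_cancel hgb
      exact_mod_cast this.symm
    have hm₁' : (m₁ : ℂ) = (g : ℂ) * m₂ := by
      have : m₂ * g = m₁ := by rw [hm₂]; exact Nat.div_mul_cancel hgm
      push_cast [← this]; ring
    have hzw : z ^ b ^ J d = Complex.exp (2 * Real.pi * Complex.I / d) ^ m₂ := by
      rw [hz, ← Complex.exp_nat_mul, ← Complex.exp_nat_mul]
      congr 1
      have hbk : (b : ℂ) ^ k = (b : ℂ) ^ s * (b : ℂ) * (b : ℂ) ^ J d := by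
        rw [hk]; rw [pow_add, pow_add, pow_one]
      push_cast
      rw [hbk, hbdg, hm₁']
      field_simp
    obtain ⟨Q, hQ⟩ := hJ d hdb hd1
    rw [hQ, map_mul]
    have : aeval z ((cyclotomic d ℤ).comp (X ^ b ^ J d)) = 0 := by
      rw [aeval_comp, map_pow, aeval_X, hzw]
      rw [aeval_def, eval₂_eq_eval_map, map_cyclotomic]
      exact hw.isRoot_cyclotomic (by omega)
    rw [this, zero_mul]
  · -- product divisibility
    apply Finset.prod_dvd_of_isRelPrime
    · intro d hd e he hde
      simp only [Finset.coe_filter, Set.mem_setOf_eq, Nat.mem_divisors] at hd he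
      exact relprime_comp hb hd.1.1 he.1.1 hd.2 he.2 hde
    · intro d hd
      simp only [Finset.mem_filter, Nat.mem_divisors] at hd
      exact hJ d hd.1.1 hd.2
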